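/- Let Γ be a group generated by a finite symmetric set S with 1 ∉ S. Let E = {(x, y) ∈ S × S : x⁻¹y ∈ S}, assume E ≠ ∅, put μ(x) = |{ y ∈ S : (x, y) ∈ E }| / |E| for x ∈ S (a probability measure on S), endow L²(S, μ) with the inner product ⟨ξ, η⟩ = Σ_{x∈S} μ(x)ξ(x)η(x) and L²(E) with the uniform probability measure, define d : L²(S, μ) → L²(E) by (dξ)(x, y) = ξ(y) − ξ(x), set Λ = d*d/2, and let P be the orthogonal projection of L²(S, μ) onto the constant functions. Let λ > 0 and suppose λ⁻¹Λ + P − I is positive semidefinite on L²(S, μ) (which holds when the link graph (S, E) is connected and the spectrum of Λ is contained in {0} ∪ [λ, ∞)). Then there exist elements ξᵢ ∈ ℝ[Γ], i ∈ S, such that Δ_μ² − (2 − λ⁻¹)Δ_μ = Σ_{i∈S} ξᵢ*ξᵢ. In particular, if λ > 1/2 then Δ_μ² − κΔ_μ is a sum of hermitian squares for κ = 2 − λ⁻¹ > 0. -/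

import Mathlib

open MonoidAlgebra Finset RealInnerProductSpace

/-- The involution `ξ*(x) = ξ(x⁻¹)` on the real group algebra `ℝ[Γ]`. -/
def astar {Γ : Type*} [Group Γ] (ξ : MonoidAlgebra ℝ Γ) : MonoidAlgebra ℝ Γ :=
  MonoidAlgebra.ofCoeff (Finsupp.equivMapDomain (Equiv.inv Γ) ξ.coeff)

/-- The augmentation character `ℝ[Γ] → ℝ`, `ξ ↦ Σ_x ξ(x)`. -/
noncomputable def aug (Γ : Type*) [Group Γ] : MonoidAlgebra ℝ Γ →ₐ[ℝ] ℝ :=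
  MonoidAlgebra.lift ℝ ℝ Γ 1

/-- The augmentation ideal `I[Γ] = {ξ ∈ ℝ[Γ] : Σ_x ξ(x) = 0}`, as an `ℝ`-submodule. -/
noncomputable def augIdeal (Γ : Type*) [Group Γ] : Submodule ℝ (MonoidAlgebra ℝ Γ) :=
  LinearMap.ker (aug Γ).toLinearMap

/-- `Σ²ℝ[Γ]`, the set of finite sums of hermitian squares in `ℝ[Γ]`. -/
def SOS (Γ : Type*) [Group Γ] : Set (MonoidAlgebra ℝ Γ) :=
  {ξ | ∃ (n : ℕ) (f : Fin n → MonoidAlgebra ℝ Γ), ξ = ∑ i, astar (f i) * f i}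

/-- `Σ²I[Γ]`, the set of finite sums of hermitian squares of elements of `I[Γ]`. -/
def SOSI (Γ : Type*) [Group Γ] : Set (MonoidAlgebra ℝ Γ) :=
  {ξ | ∃ (n : ℕ) (f : Fin n → MonoidAlgebra ℝ Γ),
    (∀ i, f i ∈ augIdeal Γ) ∧ ξ = ∑ i, astar (f i) * f i}

lemma astar_apply' {Γ : Type*} [Group Γ] (ξ : MonoidAlgebra ℝ Γ) (g : Γ) :
    (astar ξ).coeff g = ξ.coeff g⁻¹ := rfl

lemma astar_add' {Γ : Type*} [Group Γ] (ξ η : MonoidAlgebra ℝ Γ) :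
    astar (ξ + η) = astar ξ + astar η := by
  ext g; simp only [astar_apply', MonoidAlgebra.coeff_add, Finsupp.add_apply]

lemma astar_smul' {Γ : Type*} [Group Γ] (c : ℝ) (ξ : MonoidAlgebra ℝ Γ) :
    astar (c • ξ) = c • astar ξ := by
  ext g; simp only [astar_apply', MonoidAlgebra.coeff_smul, Finsupp.smul_apply]

lemma astar_sum' {Γ : Type*} [Group Γ] {α : Type*} (s : Finset α)
    (f : α → MonoidAlgebra ℝ Γ) : astar (∑ i ∈ s, f i) = ∑ i ∈ s, astar (f i) := by
  ext g
  rw [astar_apply', MonoidAlgebra.coeff_sum, MonoidAlgebra.coeff_sum, Finsupp.finset_sum_apply,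
    Finsupp.finset_sum_apply]
  exact Finset.sum_congr rfl fun i _ => rfl

lemma astar_single' {Γ : Type*} [Group Γ] (g : Γ) (c : ℝ) :
    astar (MonoidAlgebra.single g c) = MonoidAlgebra.single g⁻¹ c :=
  congrArg MonoidAlgebra.ofCoeff (Finsupp.equivMapDomain_single _ _ _)

lemma astar_one' {Γ : Type*} [Group Γ] : astar (1 : MonoidAlgebra ℝ Γ) = 1 := by
  rw [MonoidAlgebra.one_def, astar_single', inv_one]

lemma astar_sub' {Γ : Type*} [Group Γ] (ξ η : MonoidAlgebra ℝ Γ) :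
    astar (ξ - η) = astar ξ - astar η := by
  ext g
  rw [astar_apply', MonoidAlgebra.coeff_sub, MonoidAlgebra.coeff_sub, Finsupp.sub_apply,
    Finsupp.sub_apply]
  rfl

/-- collapse of the incidence-vector sum against a module-valued function -/
lemma sum_e_smul {α : Type*} [DecidableEq α] {M : Type*} [AddCommGroup M] [Module ℝ M]
    (S : Finset α) {a b : α} (ha : a ∈ S) (hb : b ∈ S) (v : α → M) :
    ∑ x ∈ S, (((if b = x then (1:ℝ) else 0) - (if a = x then 1 else 0)) • v x)
      = v b - v a := by
  have h : ∀ x ∈ S, (((if b = x then (1:ℝ) else 0) - (if a = x then 1 else 0)) • v x)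
      = (if b = x then v x else 0) - (if a = x then v x else 0) := by
    intro x _
    split_ifs <;> simp
  rw [Finset.sum_congr rfl h, Finset.sum_sub_distrib, Finset.sum_ite_eq, Finset.sum_ite_eq,
    if_pos ha, if_pos hb]

/-- reindexing a sum over a symmetric set by inversion -/
lemma sum_inv_symm {Γ : Type*} [Group Γ] [DecidableEq Γ] (S : Finset Γ)
    (hS : ∀ s ∈ S, s⁻¹ ∈ S) {M : Type*} [AddCommMonoid M] (f : Γ → M) :
    ∑ x ∈ S, f x⁻¹ = ∑ x ∈ S, f x :=
  Finset.sum_nbij' (fun x => x⁻¹) (fun x => x⁻¹) (fun a ha => hS a ha) (fun a ha => hS a ha)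
    (fun a _ => inv_inv a) (fun a _ => inv_inv a) (fun a _ => rfl)

open scoped MatrixOrder in
lemma psd_factor {ι : Type*} [Fintype ι] [DecidableEq ι] (Mm : Matrix ι ι ℝ) (hHerm : Mm.IsHermitian)
    (hPos : ∀ f : ι → ℝ, 0 ≤ dotProduct (star f) (Mm.mulVec f)) :
    ∃ Bm : Matrix ι ι ℝ, Mm = Bm.conjTranspose * Bm := by
  have h0 : 0 ≤ Mm := Matrix.nonneg_iff_posSemidef.mpr
    (Matrix.PosSemidef.of_dotProduct_mulVec_nonneg hHerm hPos)
  refine ⟨CFC.sqrt Mm, ?_⟩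
  rw [← Matrix.star_eq_conjTranspose, (CFC.sqrt_nonneg Mm).isSelfAdjoint.star_eq,
    CFC.sqrt_mul_sqrt_self Mm h0]

/-- the Żuk/Ballmann–Świątkowski spectral criterion, in witnessed form. -/
theorem stmt17 {Γ : Type*} [Group Γ] [DecidableEq Γ] (S : Finset Γ)
    (hSsymm : ∀ s ∈ S, s⁻¹ ∈ S) (hone : (1 : Γ) ∉ S)
    (hSgen : Subgroup.closure (S : Set Γ) = ⊤)
    (E : Finset (Γ × Γ)) (hE : E = (S ×ˢ S).filter (fun p => p.1⁻¹ * p.2 ∈ S))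
    (hEne : E.Nonempty)
    (μ : MonoidAlgebra ℝ Γ)
    (hμS : ∀ x ∈ S, μ.coeff x = ((S.filter (fun y => x⁻¹ * y ∈ S)).card : ℝ) / (E.card : ℝ))
    (hμ0 : ∀ x : Γ, x ∉ S → μ.coeff x = 0)
    (lam : ℝ) (hlam : 0 < lam)
    (hPSD : ∀ f : Γ → ℝ,
      0 ≤ lam⁻¹ * (1 / 2) * ((E.card : ℝ)⁻¹ * ∑ p ∈ E, (f p.2 - f p.1) ^ 2)
          + (∑ x ∈ S, μ.coeff x * f x) ^ 2 - ∑ x ∈ S, μ.coeff x * f x ^ 2) :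
    (∃ ξ : {x // x ∈ S} → MonoidAlgebra ℝ Γ,
      (1 - μ) * (1 - μ) - (2 - lam⁻¹) • (1 - μ) = ∑ i : {x // x ∈ S}, astar (ξ i) * ξ i) ∧
    ((1 / 2 : ℝ) < lam → (0 : ℝ) < 2 - lam⁻¹) := by
  classical
  refine ⟨?_, fun h => by
    have h2 : lam⁻¹ < (1/2 : ℝ)⁻¹ := inv_strictAnti₀ (by norm_num) h
    rw [show ((1:ℝ)/2)⁻¹ = 2 by norm_num] at h2
    linarith⟩
  -- basic counting facts
  have hEpos : (0:ℝ) < E.card := by exact_mod_cast Finset.card_pos.mpr hEne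
  have hEne' : (E.card : ℝ) ≠ 0 := ne_of_gt hEpos
  set d : Γ → ℕ := fun x => (S.filter (fun y => x⁻¹ * y ∈ S)).card with hd
  have hmemE : ∀ p ∈ E, p.1 ∈ S ∧ p.2 ∈ S ∧ p.1⁻¹ * p.2 ∈ S := by
    intro p hp
    rw [hE, Finset.mem_filter, Finset.mem_product] at hp
    exact ⟨hp.1.1, hp.1.2, hp.2⟩
  have hmemE' : ∀ p : Γ × Γ, p.1 ∈ S → p.2 ∈ S → p.1⁻¹ * p.2 ∈ S → p ∈ E := by
    intro p h1 h2 h3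
    rw [hE, Finset.mem_filter, Finset.mem_product]
    exact ⟨⟨h1, h2⟩, h3⟩
  have hswapE : ∀ p : Γ × Γ, p ∈ E → (p.2, p.1) ∈ E := by
    intro p hp
    obtain ⟨h1, h2, h3⟩ := hmemE p hp
    refine hmemE' _ h2 h1 ?_
    simpa using hSsymm _ h3
  have hfiber : ∀ x ∈ S, (E.filter (fun p => p.1 = x)).card = d x := by
    intro x hx
    refine Finset.card_nbij Prod.snd ?_ ?_ ?_
    · intro p hp
      rw [Finset.mem_coe, Finset.mem_filter] at hp
      obtain ⟨h1, h2, h3⟩ := hmemE p hp.1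
      rw [Finset.mem_coe, Finset.mem_filter]
      exact ⟨h2, hp.2 ▸ h3⟩
    · intro p hp q hq hpq
      simp only [Finset.coe_filter, Set.mem_setOf_eq] at hp hq
      exact Prod.ext (hp.2.trans hq.2.symm) hpq
    · intro y hy
      simp only [Finset.coe_filter, Set.mem_setOf_eq] at hy ⊢
      exact ⟨(x, y), ⟨hmemE' (x, y) hx hy.1 hy.2, rfl⟩, rfl⟩
  have hEcard : ∑ x ∈ S, d x = E.card := by
    rw [Finset.card_eq_sum_card_fiberwise (f := Prod.fst) (t := S)
      (fun p hp => (hmemE p hp).1)]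
    exact Finset.sum_congr rfl fun x hx => (hfiber x hx).symm
  have hdsymm : ∀ x ∈ S, d x⁻¹ = d x := by
    intro x hx
    refine Finset.card_nbij (fun y => x * y) ?_ ?_ ?_
    · intro y hy
      rw [Finset.mem_coe, Finset.mem_filter] at hy ⊢
      rw [inv_inv] at hy
      exact ⟨hy.2, by simpa using hy.1⟩
    · intro a _ b _ hab
      exact mul_left_cancel hab
    · intro z hz
      simp only [Finset.coe_filter, Set.mem_setOf_eq] at hz ⊢
      exact ⟨x⁻¹ * z, ⟨hz.2, by simpa using hz.1⟩, by group⟩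
  have hc : ∀ s ∈ S, (E.filter (fun p => p.1⁻¹ * p.2 = s)).card = d s := by
    intro s hs
    refine Finset.card_nbij (fun p => p.1⁻¹) ?_ ?_ ?_
    · intro p hp
      rw [Finset.mem_coe, Finset.mem_filter] at hp ⊢
      obtain ⟨h1, h2, _⟩ := hmemE p hp.1
      refine ⟨hSsymm _ h1, ?_⟩
      have : p.2 = p.1 * s := by rw [← hp.2]; group
      have h4 : s⁻¹ * p.1⁻¹ = p.2⁻¹ := by rw [this]; group
      rw [h4]
      exact hSsymm _ h2
    · intro p hp q hq hpq
      simp only [Finset.coe_filter, Set.mem_setOf_eq] at hp hq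
      have h1 : p.1 = q.1 := by
        have := congrArg (·⁻¹) hpq; simpa using this
      refine Prod.ext h1 ?_
      have hp2 : p.2 = p.1 * s := by rw [← hp.2]; group
      have hq2 : q.2 = q.1 * s := by rw [← hq.2]; group
      rw [hp2, hq2, h1]
    · intro y hy
      simp only [Finset.coe_filter, Set.mem_setOf_eq] at hy ⊢
      refine ⟨(y⁻¹, y⁻¹ * s), ⟨?_, by group⟩, by simp⟩
      refine hmemE' _ (hSsymm _ hy.1) ?_ (by simpa using hs)
      have : y⁻¹ * s = (s⁻¹ * y)⁻¹ := by group
      rw [this]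
      exact hSsymm _ hy.2
  have hc0 : ∀ s, s ∉ S → (E.filter (fun p => p.1⁻¹ * p.2 = s)) = ∅ := by
    intro s hs
    rw [Finset.filter_eq_empty_iff]
    intro p hp hps
    exact hs (hps ▸ (hmemE p hp).2.2)
  -- μ.coeff facts
  have hμd : ∀ x ∈ S, μ.coeff x = (d x : ℝ) / E.card := hμS
  have hμsymm : ∀ x : Γ, μ.coeff x⁻¹ = μ.coeff x := by
    intro x
    by_cases hx : x ∈ S
    · rw [hμd x hx, hμd x⁻¹ (hSsymm x hx), hdsymm x hx]
    · have hx' : x⁻¹ ∉ S := fun hh => hx (by simpa using hSsymm _ hh)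
      rw [hμ0 x hx, hμ0 x⁻¹ hx']
  have hμsum : ∑ x ∈ S, μ.coeff x = 1 := by
    rw [Finset.sum_congr rfl hμd, ← Finset.sum_div]
    rw [show ∑ x ∈ S, (d x : ℝ) = (E.card : ℝ) by exact_mod_cast congrArg Nat.cast hEcard]
    exact div_self hEne'
  have hμrepr : μ = ∑ x ∈ S, MonoidAlgebra.single x (μ.coeff x) := by
    ext g
    rw [MonoidAlgebra.coeff_sum, Finsupp.finset_sum_apply]
    have : ∀ x ∈ S, (MonoidAlgebra.single x (μ.coeff x)).coeff g = if x = g then μ.coeff x else 0 := by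
      intro x _; exact Finsupp.single_apply
    rw [Finset.sum_congr rfl this, Finset.sum_ite_eq']
    by_cases hg : g ∈ S
    · rw [if_pos hg]
    · rw [if_neg hg, hμ0 g hg]
  -- the two edge sums
  have hEμ : ∑ p ∈ E, MonoidAlgebra.single (p.1⁻¹ * p.2) (1:ℝ) = (E.card : ℝ) • μ := by
    ext g
    rw [MonoidAlgebra.coeff_sum, Finsupp.finset_sum_apply, MonoidAlgebra.coeff_smul,
      Finsupp.smul_apply]
    have : ∀ p ∈ E, (MonoidAlgebra.single (p.1⁻¹ * p.2) (1:ℝ)).coeff g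
        = if p.1⁻¹ * p.2 = g then (1:ℝ) else 0 := by
      intro p _; exact Finsupp.single_apply
    rw [Finset.sum_congr rfl this, Finset.sum_boole]
    by_cases hg : g ∈ S
    · rw [hc g hg, hμd g hg, smul_eq_mul]
      field_simp
    · rw [hc0 g hg, hμ0 g hg]
      simp
  have hEμ' : ∑ p ∈ E, MonoidAlgebra.single (p.2⁻¹ * p.1) (1:ℝ) = (E.card : ℝ) • μ := by
    rw [← hEμ]
    exact Finset.sum_nbij' (fun p => (p.2, p.1)) (fun p => (p.2, p.1))
      (fun p hp => hswapE p hp) (fun p hp => hswapE p hp)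
      (fun p _ => rfl) (fun p _ => rfl) (fun p _ => rfl)
  -- element-level notation
  set B : Γ → MonoidAlgebra ℝ Γ := fun g => 1 - MonoidAlgebra.single g 1 with hB
  have hastarB : ∀ g : Γ, astar (B g) = 1 - MonoidAlgebra.single g⁻¹ 1 := by
    intro g
    rw [hB]
    simp only []
    rw [astar_sub', astar_one', astar_single']
  set ee : Γ × Γ → Γ → ℝ :=
    fun p x => (if p.2 = x then (1:ℝ) else 0) - (if p.1 = x then 1 else 0) with hee
  set K : Γ → Γ → ℝ := fun x y => ∑ p ∈ E, ee p x * ee p y with hK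
  set Mf : Γ → Γ → ℝ := fun x y =>
    lam⁻¹ * (2 * (E.card : ℝ))⁻¹ * K x y + μ.coeff x * μ.coeff y - (if x = y then μ.coeff x else 0) with hMf
  -- single products
  have hprod : ∀ a b : Γ,
      (MonoidAlgebra.single a⁻¹ (1:ℝ) - MonoidAlgebra.single b⁻¹ 1)
        * (MonoidAlgebra.single a 1 - MonoidAlgebra.single b 1)
      = (2:ℝ) • 1 - MonoidAlgebra.single (a⁻¹ * b) 1 - MonoidAlgebra.single (b⁻¹ * a) 1 := by
    intro a b
    rw [sub_mul, mul_sub, mul_sub, MonoidAlgebra.single_mul_single,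
      MonoidAlgebra.single_mul_single, MonoidAlgebra.single_mul_single,
      MonoidAlgebra.single_mul_single, inv_mul_cancel, inv_mul_cancel, mul_one,
      two_smul, MonoidAlgebra.one_def]
    abel
  -- D2 : the edge double sum
  have hD2 : ∑ x ∈ S, ∑ y ∈ S, K x y • (astar (B x) * B y) = (2 * (E.card:ℝ)) • (1 - μ) := by
    have step1 : ∀ x ∈ S, ∀ y ∈ S, K x y • (astar (B x) * B y)
        = ∑ p ∈ E, (ee p x • astar (B x)) * (ee p y • B y) := by
      intro x _ y _
      rw [hK]
      simp only []
      rw [Finset.sum_smul]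
      exact Finset.sum_congr rfl fun p _ => by rw [smul_mul_smul_comm]
    calc ∑ x ∈ S, ∑ y ∈ S, K x y • (astar (B x) * B y)
        = ∑ x ∈ S, ∑ y ∈ S, ∑ p ∈ E, (ee p x • astar (B x)) * (ee p y • B y) := by
          refine Finset.sum_congr rfl fun x hx => Finset.sum_congr rfl fun y hy => ?_
          exact step1 x hx y hy
      _ = ∑ p ∈ E, ∑ x ∈ S, ∑ y ∈ S, (ee p x • astar (B x)) * (ee p y • B y) := by
          rw [show (∑ x ∈ S, ∑ y ∈ S, ∑ p ∈ E, (ee p x • astar (B x)) * (ee p y • B y))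
              = ∑ x ∈ S, ∑ p ∈ E, ∑ y ∈ S, (ee p x • astar (B x)) * (ee p y • B y) from
            Finset.sum_congr rfl fun x _ => Finset.sum_comm]
          exact Finset.sum_comm
      _ = ∑ p ∈ E, ((2:ℝ) • 1 - MonoidAlgebra.single (p.1⁻¹ * p.2) 1
            - MonoidAlgebra.single (p.2⁻¹ * p.1) 1) := by
          refine Finset.sum_congr rfl fun p hp => ?_
          obtain ⟨h1, h2, _⟩ := hmemE p hp
          rw [← Finset.sum_mul_sum]
          have e1 : ∑ x ∈ S, ee p x • astar (B x) = astar (B p.2) - astar (B p.1) :=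
            sum_e_smul S h1 h2 _
          have e2 : ∑ y ∈ S, ee p y • B y = B p.2 - B p.1 :=
            sum_e_smul S h1 h2 _
          rw [e1, e2, hastarB, hastarB, hB]
          simp only []
          rw [show (1 - MonoidAlgebra.single (p.2)⁻¹ (1:ℝ)) - (1 - MonoidAlgebra.single (p.1)⁻¹ 1)
              = MonoidAlgebra.single (p.1)⁻¹ 1 - MonoidAlgebra.single (p.2)⁻¹ 1 by abel,
            show (1 - MonoidAlgebra.single p.2 (1:ℝ)) - (1 - MonoidAlgebra.single p.1 1)
              = MonoidAlgebra.single p.1 1 - MonoidAlgebra.single p.2 1 by abel]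
          exact hprod p.1 p.2
      _ = (2 * (E.card:ℝ)) • (1 - μ) := by
          rw [Finset.sum_sub_distrib, Finset.sum_sub_distrib, Finset.sum_const, hEμ, hEμ',
            ← Nat.cast_smul_eq_nsmul ℝ]
          module
  -- D3 : the rank-one double sum
  have hsumB : ∑ x ∈ S, μ.coeff x • B x = 1 - μ := by
    rw [hB]
    simp only []
    have : ∀ x ∈ S, μ.coeff x • ((1:MonoidAlgebra ℝ Γ) - MonoidAlgebra.single x 1)
        = μ.coeff x • 1 - MonoidAlgebra.single x (μ.coeff x) := by
      intro x _
      rw [smul_sub, MonoidAlgebra.smul_single', mul_one]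
    rw [Finset.sum_congr rfl this, Finset.sum_sub_distrib, ← Finset.sum_smul, hμsum, one_smul,
      ← hμrepr]
  have hsumB' : ∑ x ∈ S, μ.coeff x • astar (B x) = 1 - μ := by
    have : ∀ x ∈ S, μ.coeff x • astar (B x)
        = μ.coeff x • 1 - MonoidAlgebra.single x⁻¹ (μ.coeff x) := by
      intro x _
      rw [hastarB, smul_sub, MonoidAlgebra.smul_single', mul_one]
    rw [Finset.sum_congr rfl this, Finset.sum_sub_distrib, ← Finset.sum_smul, hμsum, one_smul]
    have hre : ∑ x ∈ S, MonoidAlgebra.single x⁻¹ (μ.coeff x)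
        = ∑ x ∈ S, MonoidAlgebra.single x (μ.coeff x) := by
      have := sum_inv_symm S hSsymm (fun x => MonoidAlgebra.single x (μ.coeff x⁻¹))
      simp only [inv_inv] at this
      calc ∑ x ∈ S, MonoidAlgebra.single x⁻¹ (μ.coeff x) = ∑ x ∈ S, MonoidAlgebra.single x (μ.coeff x⁻¹) := this
        _ = ∑ x ∈ S, MonoidAlgebra.single x (μ.coeff x) := by
            exact Finset.sum_congr rfl fun x _ => by rw [hμsymm]
    rw [hre, ← hμrepr]
  have hD3 : ∑ x ∈ S, ∑ y ∈ S, (μ.coeff x * μ.coeff y) • (astar (B x) * B y) = (1 - μ) * (1 - μ) := by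
    calc ∑ x ∈ S, ∑ y ∈ S, (μ.coeff x * μ.coeff y) • (astar (B x) * B y)
        = (∑ x ∈ S, μ.coeff x • astar (B x)) * (∑ y ∈ S, μ.coeff y • B y) := by
          rw [Finset.sum_mul_sum]
          exact Finset.sum_congr rfl fun x _ => Finset.sum_congr rfl fun y _ =>
            (smul_mul_smul_comm _ _ _ _).symm
      _ = (1 - μ) * (1 - μ) := by rw [hsumB', hsumB]
  -- D4 : the diagonal double sum
  have hdiag : ∀ x : Γ, astar (B x) * B x
      = (2:ℝ) • 1 - MonoidAlgebra.single x 1 - MonoidAlgebra.single x⁻¹ 1 := by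
    intro x
    rw [hastarB, hB]
    simp only []
    rw [sub_mul, mul_sub, mul_sub, one_mul, one_mul, mul_one,
      MonoidAlgebra.single_mul_single, inv_mul_cancel, one_mul, two_smul,
      MonoidAlgebra.one_def]
    abel
  have hD4 : ∑ x ∈ S, ∑ y ∈ S, (if x = y then μ.coeff x else 0) • (astar (B x) * B y)
      = (2:ℝ) • (1 - μ) := by
    have inner : ∀ x ∈ S, ∑ y ∈ S, (if x = y then μ.coeff x else 0) • (astar (B x) * B y)
        = μ.coeff x • (astar (B x) * B x) := by
      intro x hx
      have : ∀ y ∈ S, (if x = y then μ.coeff x else 0) • (astar (B x) * B y)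
          = if x = y then μ.coeff x • (astar (B x) * B y) else 0 := by
        intro y _
        rw [ite_smul, zero_smul]
      rw [Finset.sum_congr rfl this, Finset.sum_ite_eq, if_pos hx]
    rw [Finset.sum_congr rfl inner]
    have : ∀ x ∈ S, μ.coeff x • (astar (B x) * B x)
        = μ.coeff x • ((2:ℝ) • (1:MonoidAlgebra ℝ Γ)) - MonoidAlgebra.single x (μ.coeff x)
          - MonoidAlgebra.single x⁻¹ (μ.coeff x) := by
      intro x _
      rw [hdiag, smul_sub, smul_sub, MonoidAlgebra.smul_single', MonoidAlgebra.smul_single', mul_one]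
    rw [Finset.sum_congr rfl this, Finset.sum_sub_distrib, Finset.sum_sub_distrib,
      ← Finset.sum_smul, hμsum, one_smul]
    have hre : ∑ x ∈ S, MonoidAlgebra.single x⁻¹ (μ.coeff x)
        = ∑ x ∈ S, MonoidAlgebra.single x (μ.coeff x) := by
      have := sum_inv_symm S hSsymm (fun x => MonoidAlgebra.single x (μ.coeff x⁻¹))
      simp only [inv_inv] at this
      calc ∑ x ∈ S, MonoidAlgebra.single x⁻¹ (μ.coeff x) = ∑ x ∈ S, MonoidAlgebra.single x (μ.coeff x⁻¹) := this
        _ = ∑ x ∈ S, MonoidAlgebra.single x (μ.coeff x) := by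
            exact Finset.sum_congr rfl fun x _ => by rw [hμsymm]
    rw [hre, ← hμrepr]
    module
  -- the master identity
  have hD : ∑ x ∈ S, ∑ y ∈ S, Mf x y • (astar (B x) * B y)
      = (1 - μ) * (1 - μ) - (2 - lam⁻¹) • (1 - μ) := by
    have expand : ∀ x ∈ S, ∀ y ∈ S, Mf x y • (astar (B x) * B y)
        = (lam⁻¹ * (2 * (E.card : ℝ))⁻¹) • (K x y • (astar (B x) * B y))
          + (μ.coeff x * μ.coeff y) • (astar (B x) * B y)
          - (if x = y then μ.coeff x else 0) • (astar (B x) * B y) := by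
      intro x _ y _
      rw [hMf]
      simp only []
      rw [sub_smul, add_smul, mul_smul]
    calc ∑ x ∈ S, ∑ y ∈ S, Mf x y • (astar (B x) * B y)
        = (lam⁻¹ * (2 * (E.card : ℝ))⁻¹) • (∑ x ∈ S, ∑ y ∈ S, K x y • (astar (B x) * B y))
          + ∑ x ∈ S, ∑ y ∈ S, (μ.coeff x * μ.coeff y) • (astar (B x) * B y)
          - ∑ x ∈ S, ∑ y ∈ S, (if x = y then μ.coeff x else 0) • (astar (B x) * B y) := by
          rw [Finset.smul_sum, ← Finset.sum_add_distrib, ← Finset.sum_sub_distrib]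
          refine Finset.sum_congr rfl fun x hx => ?_
          rw [Finset.smul_sum, ← Finset.sum_add_distrib, ← Finset.sum_sub_distrib]
          exact Finset.sum_congr rfl fun y hy => expand x hx y hy
      _ = (lam⁻¹ * (2 * (E.card : ℝ))⁻¹) • ((2 * (E.card:ℝ)) • (1 - μ))
          + (1 - μ) * (1 - μ) - (2:ℝ) • (1 - μ) := by rw [hD2, hD3, hD4]
      _ = (1 - μ) * (1 - μ) - (2 - lam⁻¹) • (1 - μ) := by
          rw [smul_smul, mul_assoc, inv_mul_cancel₀ (mul_ne_zero two_ne_zero hEne' : (2 * (E.card:ℝ)) ≠ 0),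
            mul_one]
          module
  -- the scalar quadratic form identity
  have hquad : ∀ F : Γ → ℝ, ∑ x ∈ S, ∑ y ∈ S, F x * Mf x y * F y
      = lam⁻¹ * (1 / 2) * ((E.card : ℝ)⁻¹ * ∑ p ∈ E, (F p.2 - F p.1) ^ 2)
        + (∑ x ∈ S, μ.coeff x * F x) ^ 2 - ∑ x ∈ S, μ.coeff x * F x ^ 2 := by
    intro F
    have hFe : ∀ p ∈ E, ∑ x ∈ S, F x * ee p x = F p.2 - F p.1 := by
      intro p hp
      obtain ⟨h1, h2, _⟩ := hmemE p hp
      calc ∑ x ∈ S, F x * ee p x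
          = ∑ x ∈ S, (((if p.2 = x then (1:ℝ) else 0) - (if p.1 = x then 1 else 0)) • F x) := by
            refine Finset.sum_congr rfl fun x _ => ?_
            rw [mul_comm]
            rfl
        _ = F p.2 - F p.1 := sum_e_smul S h1 h2 F
    have q1 : ∑ x ∈ S, ∑ y ∈ S, F x * K x y * F y = ∑ p ∈ E, (F p.2 - F p.1) ^ 2 := by
      calc ∑ x ∈ S, ∑ y ∈ S, F x * K x y * F y
          = ∑ x ∈ S, ∑ y ∈ S, ∑ p ∈ E, (F x * ee p x) * (F y * ee p y) := by
            refine Finset.sum_congr rfl fun x _ => Finset.sum_congr rfl fun y _ => ?_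
            rw [hK]
            simp only []
            rw [Finset.mul_sum, Finset.sum_mul]
            exact Finset.sum_congr rfl fun p _ => by ring
        _ = ∑ p ∈ E, ∑ x ∈ S, ∑ y ∈ S, (F x * ee p x) * (F y * ee p y) := by
            rw [show (∑ x ∈ S, ∑ y ∈ S, ∑ p ∈ E, (F x * ee p x) * (F y * ee p y))
                = ∑ x ∈ S, ∑ p ∈ E, ∑ y ∈ S, (F x * ee p x) * (F y * ee p y) from
              Finset.sum_congr rfl fun x _ => Finset.sum_comm]
            exact Finset.sum_comm
        _ = ∑ p ∈ E, (F p.2 - F p.1) ^ 2 := by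
            refine Finset.sum_congr rfl fun p hp => ?_
            rw [← Finset.sum_mul_sum, hFe p hp, sq]
    have q2 : ∑ x ∈ S, ∑ y ∈ S, F x * (μ.coeff x * μ.coeff y) * F y = (∑ x ∈ S, μ.coeff x * F x) ^ 2 := by
      rw [sq, Finset.sum_mul_sum]
      exact Finset.sum_congr rfl fun x _ => Finset.sum_congr rfl fun y _ => by ring
    have q3 : ∑ x ∈ S, ∑ y ∈ S, F x * (if x = y then μ.coeff x else 0) * F y
        = ∑ x ∈ S, μ.coeff x * F x ^ 2 := by
      refine Finset.sum_congr rfl fun x hx => ?_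
      have h : ∀ y ∈ S, F x * (if x = y then μ.coeff x else 0) * F y
          = if x = y then F x * μ.coeff x * F y else 0 := by
        intro y _
        rcases eq_or_ne x y with h|h
        · rw [if_pos h, if_pos h]
        · rw [if_neg h, if_neg h, mul_zero, zero_mul]
      rw [Finset.sum_congr rfl h, Finset.sum_ite_eq, if_pos hx]
      ring
    calc ∑ x ∈ S, ∑ y ∈ S, F x * Mf x y * F y
        = ∑ x ∈ S, ∑ y ∈ S, (lam⁻¹ * (2 * (E.card : ℝ))⁻¹ * (F x * K x y * F y)
            + F x * (μ.coeff x * μ.coeff y) * F y - F x * (if x = y then μ.coeff x else 0) * F y) := by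
          refine Finset.sum_congr rfl fun x _ => Finset.sum_congr rfl fun y _ => ?_
          rw [hMf]
          simp only []
          ring
      _ = lam⁻¹ * (2 * (E.card : ℝ))⁻¹ * (∑ x ∈ S, ∑ y ∈ S, F x * K x y * F y)
          + (∑ x ∈ S, ∑ y ∈ S, F x * (μ.coeff x * μ.coeff y) * F y)
          - ∑ x ∈ S, ∑ y ∈ S, F x * (if x = y then μ.coeff x else 0) * F y := by
          rw [Finset.mul_sum, ← Finset.sum_add_distrib, ← Finset.sum_sub_distrib]
          refine Finset.sum_congr rfl fun x _ => ?_
          rw [Finset.mul_sum, ← Finset.sum_add_distrib, ← Finset.sum_sub_distrib]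
      _ = lam⁻¹ * (1 / 2) * ((E.card : ℝ)⁻¹ * ∑ p ∈ E, (F p.2 - F p.1) ^ 2)
          + (∑ x ∈ S, μ.coeff x * F x) ^ 2 - ∑ x ∈ S, μ.coeff x * F x ^ 2 := by
          rw [q1, q2, q3, mul_inv]
          ring
  -- the matrix
  set Mm : Matrix {x // x ∈ S} {x // x ∈ S} ℝ := Matrix.of (fun x y => Mf x.1 y.1) with hMm
  have hHerm : Mm.IsHermitian := by
    ext x y
    rw [Matrix.conjTranspose_apply, star_trivial]
    show Mf y.1 x.1 = Mf x.1 y.1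
    have hKsymm : K y.1 x.1 = K x.1 y.1 := by
      rw [hK]
      simp only []
      exact Finset.sum_congr rfl fun p _ => mul_comm _ _
    have hite : (if (y:Γ) = (x:Γ) then μ.coeff y.1 else 0) = if (x:Γ) = (y:Γ) then μ.coeff x.1 else 0 := by
      rcases eq_or_ne (x:Γ) (y:Γ) with h|h
      · rw [if_pos h, if_pos h.symm, h]
      · rw [if_neg h, if_neg h.symm]
    rw [hMf]
    simp only []
    rw [hKsymm, hite]
    ring
  have hPos : ∀ f : {x // x ∈ S} → ℝ, 0 ≤ dotProduct (star f) (Mm.mulVec f) := by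
    intro f
    rw [show star f = f from funext fun x => star_trivial _]
    set F : Γ → ℝ := fun g => if h : g ∈ S then f ⟨g, h⟩ else 0 with hF
    have hfF : ∀ x : {x // x ∈ S}, f x = F x.1 := by
      intro x
      rw [hF]
      simp only []
      rw [dif_pos x.2]
    have hdot : dotProduct f (Mm.mulVec f) = ∑ x ∈ S, ∑ y ∈ S, F x * Mf x y * F y := by
      calc dotProduct f (Mm.mulVec f)
          = ∑ x : {x // x ∈ S}, ∑ y : {x // x ∈ S}, F x.1 * Mf x.1 y.1 * F y.1 := by
            refine Finset.sum_congr rfl fun x _ => ?_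
            show f x * ∑ y : {x // x ∈ S}, Mf x.1 y.1 * f y = _
            rw [Finset.mul_sum]
            refine Finset.sum_congr rfl fun y _ => ?_
            rw [hfF x, hfF y]
            ring
        _ = ∑ x ∈ S, ∑ y ∈ S, F x * Mf x y * F y := by
            rw [← Finset.sum_coe_sort S (fun x => ∑ y ∈ S, F x * Mf x y * F y)]
            exact Finset.sum_congr rfl fun x _ =>
              Finset.sum_coe_sort S (fun y => F x.1 * Mf x.1 y * F y)
    rw [hdot, hquad F]
    exact hPSD F
  obtain ⟨Bm, hBm⟩ := psd_factor Mm hHerm hPos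
  have hBmM : ∀ x y : {x // x ∈ S}, ∑ i : {x // x ∈ S}, Bm i x * Bm i y = Mf x.1 y.1 := by
    intro x y
    have h := congrFun (congrFun hBm x) y
    rw [Matrix.mul_apply] at h
    have h2 : ∀ j : {x // x ∈ S}, Bm.conjTranspose x j * Bm j y = Bm j x * Bm j y := by
      intro j
      rw [Matrix.conjTranspose_apply, star_trivial]
    rw [Finset.sum_congr rfl fun j _ => h2 j] at h
    exact h.symm
  refine ⟨fun i => ∑ x : {x // x ∈ S}, Bm i x • B x.1, ?_⟩
  rw [← hD]
  calc ∑ x ∈ S, ∑ y ∈ S, Mf x y • (astar (B x) * B y)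
      = ∑ x : {x // x ∈ S}, ∑ y : {x // x ∈ S}, Mf x.1 y.1 • (astar (B x.1) * B y.1) := by
        rw [← Finset.sum_coe_sort S (fun x => ∑ y ∈ S, Mf x y • (astar (B x) * B y))]
        exact Finset.sum_congr rfl fun x _ => (Finset.sum_coe_sort S _).symm
    _ = ∑ x : {x // x ∈ S}, ∑ y : {x // x ∈ S}, ∑ i : {x // x ∈ S},
          (Bm i x • astar (B x.1)) * (Bm i y • B y.1) := by
        refine Finset.sum_congr rfl fun x _ => Finset.sum_congr rfl fun y _ => ?_
        rw [← hBmM x y, Finset.sum_smul]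
        exact Finset.sum_congr rfl fun i _ => (smul_mul_smul_comm _ _ _ _).symm
    _ = ∑ i : {x // x ∈ S}, ∑ x : {x // x ∈ S}, ∑ y : {x // x ∈ S},
          (Bm i x • astar (B x.1)) * (Bm i y • B y.1) := by
        rw [show (∑ x : {x // x ∈ S}, ∑ y : {x // x ∈ S}, ∑ i : {x // x ∈ S},
              (Bm i x • astar (B x.1)) * (Bm i y • B y.1))
            = ∑ x : {x // x ∈ S}, ∑ i : {x // x ∈ S}, ∑ y : {x // x ∈ S},
              (Bm i x • astar (B x.1)) * (Bm i y • B y.1) from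
          Finset.sum_congr rfl fun x _ => Finset.sum_comm]
        exact Finset.sum_comm
    _ = ∑ i : {x // x ∈ S}, astar (∑ x : {x // x ∈ S}, Bm i x • B x.1)
          * (∑ x : {x // x ∈ S}, Bm i x • B x.1) := by
        refine Finset.sum_congr rfl fun i _ => ?_
        rw [← Finset.sum_mul_sum, astar_sum']
        rw [Finset.sum_congr rfl fun (x : {x // x ∈ S}) _ => astar_smul' (Bm i x) (B x.1)]
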